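/- If a homogeneous ideal I ⊆ S = k[x_0,...,x_n] is r-regular, then its saturation degree is at most r, i.e., I agrees with its saturation I^sat in all degrees ≥ r. -/

import Mathlib

open MvPolynomial
attribute [local instance] MvPolynomial.gradedAlgebra

/-- The polynomial ring `S = k[x_0, …, x_n]`. -/
noncomputable abbrev MvP (k : Type*) [Field k] (n : ℕ) : Type _ := MvPolynomial (Fin (n+1)) k

/-- An ideal generated by linear forms. -/
def IsLinearIdeal {k : Type*} [Field k] {n : ℕ} (I : Ideal (MvP k n)) : Prop :=
  ∃ T : Set (MvP k n), T ⊆ (homogeneousSubmodule (Fin (n+1)) k 1 : Submodule k (MvP k n)) ∧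
    I = Ideal.span T

/-- `I` is `r`-regular (Castelnuovo–Mumford): there is a graded free resolution
`⋯ → ⊕_α S(-e_{α,i}) → ⋯ → ⊕_α S(-e_{α,0}) → I → 0` with all `e_{α,i} ≤ r + i`.
The `i`-th free module is `Fin (ρ i) → S` with generator degrees `e i`; gradedness of the
maps is expressed by homogeneity of the matrix entries (images of the standard basis). -/
def IdealIsRegular {k : Type*} [Field k] {n : ℕ} (I : Ideal (MvP k n)) (r : ℤ) : Prop :=
  ∃ (ρ : ℕ → ℕ) (e : ∀ i, Fin (ρ i) → ℕ)
    (δ : ∀ i, (Fin (ρ (i+1)) → MvP k n) →ₗ[MvP k n] (Fin (ρ i) → MvP k n))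
    (ε : (Fin (ρ 0) → MvP k n) →ₗ[MvP k n] MvP k n),
    LinearMap.range ε = I ∧
    LinearMap.ker ε = LinearMap.range (δ 0) ∧
    (∀ i, LinearMap.ker (δ i) = LinearMap.range (δ (i+1))) ∧
    (∀ β, ε (Pi.single β 1) ∈ homogeneousSubmodule (Fin (n+1)) k (e 0 β)) ∧
    (∀ i (β : Fin (ρ (i+1))) (α : Fin (ρ i)), δ i (Pi.single β 1) α = 0 ∨
      (e i α ≤ e (i+1) β ∧
        δ i (Pi.single β 1) α ∈ homogeneousSubmodule (Fin (n+1)) k (e (i+1) β - e i α))) ∧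
    (∀ i (β : Fin (ρ i)), (e i β : ℤ) ≤ r + i)

/-- The irrelevant maximal ideal `m = (x_0, …, x_n)`. -/
noncomputable def irrIdeal (k : Type*) [Field k] (n : ℕ) : Ideal (MvP k n) :=
  Ideal.span (Set.range X)

/-- The saturation `I^sat = {s : s·m^t ⊆ I for some t}` of `I`. -/
noncomputable def satIdeal {k : Type*} [Field k] {n : ℕ} (I : Ideal (MvP k n)) :
    Ideal (MvP k n) :=
  ⨆ t : ℕ, I.colon ((irrIdeal k n ^ t : Ideal (MvP k n)) : Set (MvP k n))

/-- `I` agrees with its saturation in all degrees `≥ r`. -/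
def SatInDegrees {k : Type*} [Field k] {n : ℕ} (I : Ideal (MvP k n)) (r : ℤ) : Prop :=
  ∀ d : ℕ, r ≤ (d : ℤ) → ∀ f ∈ homogeneousSubmodule (Fin (n+1)) k d, (f ∈ I ↔ f ∈ satIdeal I)

/-- The saturation degree of `I`: the least `r` from which `I` agrees with `I^sat`. -/
noncomputable def satDeg {k : Type*} [Field k] {n : ℕ} (I : Ideal (MvP k n)) : ℤ :=
  sInf {r : ℤ | SatInDegrees I r}


namespace RegSat

open Finset

variable {k : Type*} [Field k] {n : ℕ}

/-- Koszul sign. -/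
def ksgn (T : Finset (Fin (n+1))) (i : Fin (n+1)) : ℤ := (-1) ^ (T.filter (· < i)).card

lemma ksgn_mul_self (T : Finset (Fin (n+1))) (i : Fin (n+1)) : ksgn T i * ksgn T i = 1 := by
  rw [ksgn, ← pow_add]
  exact Even.neg_one_pow ⟨_, rfl⟩

lemma ksgn_smul_ksgn_smul {M : Type*} [AddCommGroup M] (T : Finset (Fin (n+1)))
    (i : Fin (n+1)) (x : M) : ksgn T i • ksgn T i • x = x := by
  rw [smul_smul, ksgn_mul_self, one_smul]

/-- Sign antisymmetry. -/
lemma ksgn_antisymm {T : Finset (Fin (n+1))} {i j : Fin (n+1)} (hi : i ∈ T) (hj : j ∈ T)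
    (hij : i ≠ j) :
    ksgn T i * ksgn (T.erase i) j = -(ksgn T j * ksgn (T.erase j) i) := by
  have key : ∀ a b : Fin (n+1), a ∈ T → b ∈ T → b < a →
      ksgn T a * ksgn (T.erase a) b = -(ksgn T b * ksgn (T.erase b) a) := by
    intro a b ha hb hba
    have h1 : (T.erase a).filter (· < b) = T.filter (· < b) := by
      rw [Finset.filter_erase]
      apply Finset.erase_eq_of_notMem
      simp only [Finset.mem_filter, not_and]
      intro _
      exact fun h => absurd (h.trans hba) (lt_irrefl a)
    have h2 : (T.erase b).filter (· < a) = (T.filter (· < a)).erase b := by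
      rw [Finset.filter_erase]
    have hbmem : b ∈ T.filter (· < a) := Finset.mem_filter.2 ⟨hb, hba⟩
    have hcard : ((T.filter (· < a)).erase b).card = (T.filter (· < a)).card - 1 :=
      Finset.card_erase_of_mem hbmem
    have hpos : 1 ≤ (T.filter (· < a)).card := Finset.card_pos.2 ⟨b, hbmem⟩
    simp only [ksgn, h1, h2, hcard]
    obtain ⟨m, hm⟩ : ∃ m, (T.filter (· < a)).card = m + 1 := ⟨(T.filter (· < a)).card - 1, by omega⟩
    rw [hm]
    simp [pow_succ]
    ring
  rcases lt_or_gt_of_ne hij with h | h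
  · rw [key j i hj hi h, neg_neg]
  · exact key i j hi hj h

section Koszul
variable (k) {M : Type*} [AddCommGroup M] [Module (MvPolynomial (Fin (n+1)) k) M]

/-- Koszul (cochain-style) differential on `Finset`-indexed families. -/
noncomputable def kd (t : Finset (Fin (n+1)) → M) (T : Finset (Fin (n+1))) : M :=
  ∑ i ∈ T, ksgn T i • ((X i : MvPolynomial (Fin (n+1)) k) • t (T.erase i))

lemma kd_congr {t t' : Finset (Fin (n+1)) → M} {T : Finset (Fin (n+1))}
    (h : ∀ i ∈ T, t (T.erase i) = t' (T.erase i)) : kd k t T = kd k t' T := by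
  unfold kd
  exact Finset.sum_congr rfl fun i hi => by rw [h i hi]

lemma kd_add (t t' : Finset (Fin (n+1)) → M) (T : Finset (Fin (n+1))) :
    kd k (fun U => t U + t' U) T = kd k t T + kd k t' T := by
  unfold kd
  rw [← Finset.sum_add_distrib]
  exact Finset.sum_congr rfl fun i _ => by rw [smul_add, smul_add]

lemma kd_sub (t t' : Finset (Fin (n+1)) → M) (T : Finset (Fin (n+1))) :
    kd k (fun U => t U - t' U) T = kd k t T - kd k t' T := by
  unfold kd
  rw [← Finset.sum_sub_distrib]
  exact Finset.sum_congr rfl fun i _ => by rw [smul_sub, smul_sub]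

lemma kd_map {M₂ : Type*} [AddCommGroup M₂] [Module (MvPolynomial (Fin (n+1)) k) M₂]
    (L : M →ₗ[MvPolynomial (Fin (n+1)) k] M₂) (t : Finset (Fin (n+1)) → M)
    (T : Finset (Fin (n+1))) : L (kd k t T) = kd k (fun U => L (t U)) T := by
  unfold kd
  rw [map_sum]
  exact Finset.sum_congr rfl fun i _ => by rw [map_zsmul, map_smul]

/-- The Koszul differential squares to zero. -/
lemma kd_kd (t : Finset (Fin (n+1)) → M) (T : Finset (Fin (n+1))) :
    kd k (kd k t) T = 0 := by
  unfold kd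
  have expand : ∀ i ∈ T,
      ksgn T i • ((X i : MvPolynomial (Fin (n+1)) k) •
        ∑ j ∈ T.erase i, ksgn (T.erase i) j • ((X j : MvPolynomial (Fin (n+1)) k) •
          t ((T.erase i).erase j)))
      = ∑ j ∈ T.erase i, (ksgn T i * ksgn (T.erase i) j) •
          (((X i * X j : MvPolynomial (Fin (n+1)) k)) • t ((T.erase i).erase j)) := by
    intro i _
    rw [Finset.smul_sum, Finset.smul_sum]
    refine Finset.sum_congr rfl fun j _ => ?_
    rw [smul_comm (X i : MvPolynomial (Fin (n+1)) k) (ksgn (T.erase i) j),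
      smul_smul (ksgn T i), ← smul_smul (X i : MvPolynomial (Fin (n+1)) k)]

  rw [Finset.sum_congr rfl expand, Finset.sum_sigma']
  refine Finset.sum_involution (fun p _ => ⟨p.2, p.1⟩) ?_ ?_ ?_ ?_
  · rintro ⟨i, j⟩ hp
    simp only [Finset.mem_sigma] at hp
    obtain ⟨hi, hj⟩ := hp
    have hij : i ≠ j := (Finset.ne_of_mem_erase hj).symm
    have hjT : j ∈ T := Finset.mem_of_mem_erase hj
    dsimp only
    rw [ksgn_antisymm hi hjT hij, mul_comm (X j) (X i),
      Finset.erase_right_comm (a := j) (b := i)]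
    rw [neg_smul, neg_add_cancel]
  · rintro ⟨i, j⟩ hp _
    simp only [Finset.mem_sigma] at hp
    have hij : i ≠ j := (Finset.ne_of_mem_erase hp.2).symm
    intro h
    apply hij
    have := congrArg Sigma.fst h
    simpa using this.symm
  · rintro ⟨i, j⟩ hp
    simp only [Finset.mem_sigma] at hp ⊢
    exact ⟨Finset.mem_of_mem_erase hp.2,
      Finset.mem_erase.2 ⟨(Finset.ne_of_mem_erase hp.2).symm, hp.1⟩⟩
  · rintro ⟨i, j⟩ _; rfl


lemma kd_zero (T : Finset (Fin (n+1))) : kd k (fun _ => (0 : M)) T = 0 := by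
  simp [kd]

lemma kd_singleton (u : Finset (Fin (n+1)) → M) (j : Fin (n+1)) :
    kd k u {j} = (X j : MvPolynomial (Fin (n+1)) k) • u ∅ := by
  unfold kd
  rw [Finset.sum_singleton]
  have : ksgn {j} j = 1 := by
    unfold ksgn
    rw [Finset.filter_singleton]
    simp
  rw [this, one_smul, Finset.erase_singleton]


end Koszul

variable (n) in
/-- The set of indices `< q`. -/
def Vlt (q : ℕ) : Finset (Fin (n+1)) := univ.filter (fun i => (i:ℕ) < q)

lemma mem_Vlt {q : ℕ} {i : Fin (n+1)} : i ∈ Vlt n q ↔ (i:ℕ) < q := by simp [Vlt]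

lemma Vlt_mono {q q' : ℕ} (h : q ≤ q') : Vlt n q ⊆ Vlt n q' := fun i hi =>
  mem_Vlt.2 (lt_of_lt_of_le (mem_Vlt.1 hi) h)

lemma Vlt_succ_eq_insert {q : ℕ} (hq : q < n+1) :
    Vlt n (q+1) = insert (⟨q, hq⟩ : Fin (n+1)) (Vlt n q) := by
  ext i
  simp only [mem_Vlt, Finset.mem_insert]
  constructor
  · intro h
    rcases Nat.lt_succ_iff_lt_or_eq.1 h with h | h
    · exact Or.inr h
    · exact Or.inl (Fin.ext h)
  · rintro (rfl | h)
    · exact Nat.lt_succ_self q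
    · exact Nat.lt_succ_of_lt h

lemma not_mem_Vlt_self {q : ℕ} (hq : q < n+1) : (⟨q, hq⟩ : Fin (n+1)) ∉ Vlt n q := by
  simp [mem_Vlt]

lemma card_Vlt : ∀ q : ℕ, q ≤ n+1 → (Vlt n q).card = q := by
  intro q
  induction q with
  | zero =>
    intro _
    rw [Finset.card_eq_zero]
    ext i; simp [mem_Vlt]
  | succ q ih =>
    intro hq
    have hq' : q < n + 1 := by omega
    rw [Vlt_succ_eq_insert hq', Finset.card_insert_of_notMem (not_mem_Vlt_self hq'),
      ih (by omega)]

variable (k n) in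
/-- Ideal generated by the variables in `V`. -/
noncomputable def JV (V : Finset (Fin (n+1))) : Ideal (MvPolynomial (Fin (n+1)) k) :=
  Ideal.span (X '' (V : Set (Fin (n+1))))

lemma X_mem_JV {V : Finset (Fin (n+1))} {i : Fin (n+1)} (hi : i ∈ V) :
    (X i : MvPolynomial (Fin (n+1)) k) ∈ JV k n V :=
  Ideal.subset_span ⟨i, hi, rfl⟩

/-- The substitution killing the variables below `q`. -/
noncomputable def killLow (q : ℕ) :
    MvPolynomial (Fin (n+1)) k →ₐ[k] MvPolynomial (Fin (n+1)) k :=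
  aeval (fun i : Fin (n+1) => if (i:ℕ) < q then 0 else X i)

lemma killLow_eq_zero_of_mem {q : ℕ} {p : MvPolynomial (Fin (n+1)) k}
    (hp : p ∈ JV k n (Vlt n q)) : killLow q p = 0 := by
  have hle : JV k n (Vlt n q) ≤ RingHom.ker (killLow (k := k) (n := n) q).toRingHom := by
    rw [JV, Ideal.span_le]
    rintro _ ⟨i, hi, rfl⟩
    simp only [SetLike.mem_coe, RingHom.mem_ker, AlgHom.toRingHom_eq_coe, RingHom.coe_coe,
      killLow, aeval_X]
    rw [if_pos (mem_Vlt.1 hi)]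
  exact hle hp

lemma sub_killLow_mem {q : ℕ} (p : MvPolynomial (Fin (n+1)) k) :
    p - killLow q p ∈ JV k n (Vlt n q) := by
  induction p using MvPolynomial.induction_on with
  | C a => simp [killLow]
  | add p r hp hr =>
    have : p + r - killLow q (p + r) = (p - killLow q p) + (r - killLow q r) := by
      rw [map_add]; ring
    rw [this]
    exact Ideal.add_mem _ hp hr
  | mul_X p i hp =>
    rw [map_mul, killLow, aeval_X]
    by_cases hi : (i:ℕ) < q
    · rw [if_pos hi, mul_zero, sub_zero]
      exact Ideal.mul_mem_left _ _ (X_mem_JV (mem_Vlt.2 hi))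
    · rw [if_neg hi]
      have : p * X i - killLow q p * X i = (p - killLow q p) * X i := by ring
      rw [killLow] at this
      rw [this]
      exact Ideal.mul_mem_right _ _ hp

/-- Multiplication by the next variable is injective modulo the low variables. -/
lemma mem_JV_of_X_mul {q : ℕ} (hq : q < n+1) {g : MvPolynomial (Fin (n+1)) k}
    (h : X ⟨q, hq⟩ * g ∈ JV k n (Vlt n q)) : g ∈ JV k n (Vlt n q) := by
  have h1 := killLow_eq_zero_of_mem h
  rw [map_mul] at h1
  have hx : killLow (k := k) (n := n) q (X ⟨q, hq⟩) = X ⟨q, hq⟩ := by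
    rw [killLow, aeval_X, if_neg (by simp)]
  rw [hx, mul_eq_zero] at h1
  rcases h1 with h1 | h1
  · exact absurd h1 (X_ne_zero _)
  · have := sub_killLow_mem (q := q) g
    rwa [h1, sub_zero] at this


section Exactness

lemma span_extract {N : ℕ} (V : Finset (Fin (n+1))) (g : Fin N → MvP k n)
    (hg : ∀ α, g α ∈ JV k n V) :
    ∃ u : Finset (Fin (n+1)) → (Fin N → MvP k n),
      (∀ U, ¬ U ⊆ V → u U = 0) ∧ g = kd k u V := by
  classical
  have hAux : ∀ α, ∃ c : MvP k n → MvP k n,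
      ∑ y ∈ V.image X, c y • y = g α := by
    intro α
    have hmem : g α ∈ Submodule.span (MvP k n) (↑(V.image (X (R := k))) : Set (MvP k n)) := by
      have h := hg α
      rw [JV] at h
      rwa [← Finset.coe_image] at h
    obtain ⟨c, -, hc⟩ := Submodule.mem_span_finset.1 hmem
    exact ⟨c, hc⟩
  choose c hc using hAux
  have hgsum : ∀ α, ∑ i ∈ V, (X i : MvP k n) * c α (X i) = g α := by
    intro α
    rw [← hc α, Finset.sum_image (fun x _ y _ hxy => X_injective hxy)]
    exact Finset.sum_congr rfl fun i _ => by rw [smul_eq_mul, mul_comm]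
  refine ⟨fun U => ∑ i ∈ V, if U = V.erase i then ksgn V i • (fun α => c α (X i)) else 0,
    ?_, ?_⟩
  · intro U hU
    refine Finset.sum_eq_zero fun i _ => ?_
    rw [if_neg]
    intro hUe
    exact hU (hUe ▸ Finset.erase_subset _ _)
  · funext α
    rw [kd, Finset.sum_apply, ← hgsum α]
    refine Finset.sum_congr rfl fun i hi => ?_
    have hu : (∑ j ∈ V, if V.erase i = V.erase j then
        ksgn V j • (fun α => c α (X j)) else 0) = ksgn V i • (fun α => c α (X i)) := by
      rw [Finset.sum_eq_single_of_mem i hi]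
      · rw [if_pos rfl]
      · intro j _ hji
        rw [if_neg]
        intro hE
        exact hji (((Finset.erase_inj V hi).1 hE).symm)
    show (X i : MvP k n) * c α (X i) =
      (ksgn V i • ((X i : MvP k n) • (∑ j ∈ V, if V.erase i = V.erase j then
        ksgn V j • (fun α => c α (X j)) else 0))) α
    rw [hu, smul_comm ((X i : MvP k n)) (ksgn V i), ksgn_smul_ksgn_smul]
    rw [Pi.smul_apply, smul_eq_mul]

lemma koszul_exact {N : ℕ} :
    ∀ q : ℕ, q ≤ n+1 → ∀ p : ℕ, 1 ≤ p → p < q →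
    ∀ t : Finset (Fin (n+1)) → (Fin N → MvP k n),
    (∀ T, T ⊆ Vlt n q → T.card = p + 1 → kd k t T = 0) →
    ∃ u, (∀ U, ¬ U ⊆ Vlt n q → u U = 0) ∧
      ∀ T, T ⊆ Vlt n q → T.card = p → t T = kd k u T := by
  intro q
  induction q with
  | zero => exact fun _ p hp1 hpq => absurd hpq (by omega)
  | succ q IH =>
    intro hq1 p hp1 hpq t hc
    have hqn : q < n + 1 := by omega
    set z : Fin (n+1) := ⟨q, hqn⟩ with hzdef
    have hins : Vlt n (q+1) = insert z (Vlt n q) := Vlt_succ_eq_insert hqn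
    have hznot : z ∉ Vlt n q := not_mem_Vlt_self hqn
    have hlt_z : ∀ i ∈ Vlt n q, i < z := by
      intro i hi
      exact Fin.lt_def.2 (mem_Vlt.1 hi)
    have hsub : Vlt n q ⊆ Vlt n (q+1) := Vlt_mono (by omega)
    have hksgn_ins : ∀ (U : Finset (Fin (n+1))), U ⊆ Vlt n q → ∀ i ∈ U,
        ksgn (insert z U) i = ksgn U i := by
      intro U hU i hi
      unfold ksgn
      congr 1
      rw [Finset.filter_insert]
      rw [if_neg (asymm (hlt_z i (hU hi)))]
    have herase_ins : ∀ (U : Finset (Fin (n+1))), U ⊆ Vlt n q → ∀ i ∈ U,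
        (insert z U).erase i = insert z (U.erase i) := by
      intro U hU i hi
      exact Finset.erase_insert_of_ne (fun h => hznot (h ▸ hU hi))
    -- Phase 1 : kill `t` on the `z`-free sets
    obtain ⟨u₁, hu₁s, hu₁⟩ : ∃ u₁, (∀ U, ¬ U ⊆ Vlt n q → u₁ U = 0) ∧
        ∀ T, T ⊆ Vlt n q → T.card = p → t T = kd k u₁ T := by
      rcases lt_or_eq_of_le (Nat.lt_succ_iff.1 hpq) with hplt | hpeq
      · exact IH (by omega) p hp1 hplt t (fun T hT hTc => hc T (hT.trans hsub) hTc)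
      · have hcV : (Vlt n q).card = p := by rw [card_Vlt q (by omega), hpeq]
        have hcins : (insert z (Vlt n q)).card = p + 1 := by
          rw [Finset.card_insert_of_notMem hznot, hcV]
        have h0 := hc (insert z (Vlt n q)) (by rw [hins]) hcins
        rw [kd, Finset.sum_insert hznot, Finset.erase_insert hznot] at h0
        have hA := eq_neg_of_add_eq_zero_left h0
        have h1 : (X z : MvP k n) • t (Vlt n q) = ksgn (insert z (Vlt n q)) z •
            (- ∑ i ∈ Vlt n q, ksgn (insert z (Vlt n q)) i •
              ((X i : MvP k n) • t ((insert z (Vlt n q)).erase i))) := by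
          rw [← hA, ksgn_smul_ksgn_smul]
        have hmem : ∀ α, t (Vlt n q) α ∈ JV k n (Vlt n q) := by
          intro α
          apply mem_JV_of_X_mul hqn
          rw [← hzdef]
          have h2 := congrFun h1 α
          simp only [Pi.smul_apply, Finset.sum_apply, Pi.neg_apply, smul_eq_mul] at h2
          rw [h2]
          refine zsmul_mem (neg_mem (Submodule.sum_mem _ fun i hi =>
            zsmul_mem (Ideal.mul_mem_right _ _ (X_mem_JV hi)) _)) _
        obtain ⟨u₁, hs, he⟩ := span_extract (Vlt n q) (t (Vlt n q)) hmem
        refine ⟨u₁, hs, ?_⟩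
        intro T hT hTc
        have hTV : T = Vlt n q := Finset.eq_of_subset_of_card_le hT (by rw [hcV, hTc])
        rw [hTV]
        exact he
    -- Phase 2 : the corrected family and its `z`-face
    set tt : Finset (Fin (n+1)) → (Fin N → MvP k n) := fun T => t T - kd k u₁ T with htt
    have htt_c : ∀ T, T ⊆ Vlt n (q+1) → T.card = p + 1 → kd k tt T = 0 := by
      intro T hT hTc
      rw [htt, kd_sub, kd_kd, sub_zero]
      exact hc T hT hTc
    have htt_v : ∀ T, T ⊆ Vlt n q → T.card = p → tt T = 0 := by
      intro T hT hTc
      rw [htt]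
      dsimp only
      rw [← hu₁ T hT hTc, sub_self]
    have htt_rel : ∀ U, U ⊆ Vlt n q → U.card = p →
        kd k (fun W => tt (insert z W)) U = 0 := by
      intro U hU hUc
      have hzU : z ∉ U := fun h => hznot (hU h)
      have hTq : insert z U ⊆ Vlt n (q+1) := by
        rw [hins]; exact Finset.insert_subset_insert _ hU
      have hTc2 : (insert z U).card = p + 1 := by
        rw [Finset.card_insert_of_notMem hzU, hUc]
      have h0 := htt_c (insert z U) hTq hTc2
      rw [kd, Finset.sum_insert hzU, Finset.erase_insert hzU, htt_v U hU hUc,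
        smul_zero, smul_zero, zero_add] at h0
      rw [kd, ← h0]
      refine Finset.sum_congr rfl fun i hi => ?_
      rw [hksgn_ins U hU i hi, herase_ins U hU i hi]
    -- Phase 2b : integrate the `z`-face
    obtain ⟨v, hvs, hv⟩ : ∃ v, (∀ U, ¬ U ⊆ Vlt n q → v U = 0) ∧
        ∀ U, U ⊆ Vlt n q → U.card = p - 1 → tt (insert z U) = kd k v U := by
      rcases eq_or_lt_of_le hp1 with hp1' | hp2
      · -- p = 1
        have hq0 : 0 < q := by omega
        have hi0 : ((⟨0, by omega⟩ : Fin (n+1))) ∈ Vlt n q := mem_Vlt.2 (by simpa using hq0)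
        have h0 := htt_rel {(⟨0, by omega⟩ : Fin (n+1))}
          (Finset.singleton_subset_iff.2 hi0) (by rw [Finset.card_singleton, hp1'])
        rw [kd_singleton] at h0
        have hz0 : tt (insert z ∅) = 0 := by
          funext α
          have h3 := congrFun h0 α
          rw [Pi.smul_apply, smul_eq_mul, Pi.zero_apply] at h3
          rw [Pi.zero_apply]
          rcases mul_eq_zero.1 h3 with h | h
          · exact absurd h (X_ne_zero _)
          · exact h
        refine ⟨fun _ => 0, fun U _ => rfl, ?_⟩
        intro U hU hUc
        have hUe : U = ∅ := Finset.card_eq_zero.1 (by omega)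
        rw [hUe, hz0, kd_zero]
      · exact IH (by omega) (p-1) (by omega) (by omega) (fun W => tt (insert z W))
          (fun T hT hTc => htt_rel T hT (by omega))
    -- Phase 3 : assemble
    refine ⟨fun U => u₁ U + (if z ∈ U then v (U.erase z) else 0), ?_, ?_⟩
    · intro U hU
      have hU1 : ¬ U ⊆ Vlt n q := fun h => hU (h.trans hsub)
      show u₁ U + (if z ∈ U then v (U.erase z) else 0) = 0
      rw [hu₁s U hU1, zero_add]
      by_cases hzU : z ∈ U
      · rw [if_pos hzU]
        apply hvs
        intro h
        apply hU
        rw [hins]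
        intro x hx
        by_cases hxz : x = z
        · exact Finset.mem_insert.2 (Or.inl hxz)
        · exact Finset.mem_insert.2 (Or.inr (h (Finset.mem_erase.2 ⟨hxz, hx⟩)))
      · rw [if_neg hzU]
    · intro T hT hTc
      by_cases hzT : z ∈ T
      · -- T contains z
        have hzU : z ∉ T.erase z := Finset.notMem_erase _ _
        have hTU : T = insert z (T.erase z) := (Finset.insert_erase hzT).symm
        have hUq : T.erase z ⊆ Vlt n q := by
          intro x hx
          rcases Finset.mem_insert.1 (hins ▸ hT (Finset.mem_of_mem_erase hx)) with h | h
          · exact absurd h (Finset.ne_of_mem_erase hx)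
          · exact h
        have hUc : (T.erase z).card = p - 1 := by
          rw [Finset.card_erase_of_mem hzT, hTc]
        have ht2 : t T = tt T + kd k u₁ T := by
          rw [htt]
          dsimp only
          rw [sub_add_cancel]
        have hkw : kd k (fun W => if z ∈ W then v (W.erase z) else 0) (insert z (T.erase z))
            = kd k v (T.erase z) := by
          rw [kd, Finset.sum_insert hzU, Finset.erase_insert hzU]
          rw [if_neg hzU, smul_zero, smul_zero, zero_add, kd]
          refine Finset.sum_congr rfl fun i hi => ?_
          rw [hksgn_ins _ hUq i hi, herase_ins _ hUq i hi]
          have hzUe : z ∉ (T.erase z).erase i := fun h => hzU (Finset.mem_of_mem_erase h)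
          rw [if_pos (Finset.mem_insert_self z _), Finset.erase_insert hzUe]
        rw [kd_add, ht2, hTU, hv (T.erase z) hUq hUc, hkw, add_comm]
      · -- z ∉ T
        have hTq : T ⊆ Vlt n q := by
          intro x hx
          rcases Finset.mem_insert.1 (hins ▸ hT hx) with h | h
          · exact absurd (h ▸ hx) hzT
          · exact h
        have hw : kd k (fun U => if z ∈ U then v (U.erase z) else 0) T = 0 := by
          rw [kd]
          refine Finset.sum_eq_zero fun i hi => ?_
          rw [if_neg (fun h => hzT (Finset.mem_of_mem_erase h)), smul_zero, smul_zero]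
        rw [kd_add, hw, add_zero]
        exact hu₁ T hTq hTc

end Exactness

section Graded

lemma comp_mul_homog {c D : ℕ} (hcD : c ≤ D) {M : MvP k n}
    (hM : M ∈ homogeneousSubmodule (Fin (n+1)) k c) (h : MvP k n) :
    homogeneousComponent D (h * M) = homogeneousComponent (D - c) h * M := by
  conv_lhs => rw [← sum_homogeneousComponent h]
  rw [Finset.sum_mul, map_sum]
  have hterm : ∀ i ∈ Finset.range (h.totalDegree + 1),
      homogeneousComponent D (homogeneousComponent i h * M)
      = if i = D - c then homogeneousComponent i h * M else 0 := by
    intro i _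
    have hmem : homogeneousComponent i h * M ∈
        homogeneousSubmodule (Fin (n+1)) k (i + c) := by
      rw [mem_homogeneousSubmodule]
      exact (homogeneousComponent_isHomogeneous i h).mul ((mem_homogeneousSubmodule _ _).1 hM)
    rw [homogeneousComponent_of_mem hmem]
    by_cases hi : i = D - c
    · rw [if_pos (by omega), if_pos hi]
    · rw [if_neg (by omega), if_neg hi]
  rw [Finset.sum_congr rfl hterm,
    Finset.sum_ite_eq' (Finset.range (h.totalDegree + 1)) (D - c)
      (fun i => homogeneousComponent i h * M)]
  by_cases hD : D - c ∈ Finset.range (h.totalDegree + 1)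
  · rw [if_pos hD]
  · rw [if_neg hD, homogeneousComponent_eq_zero, zero_mul]
    have : h.totalDegree + 1 ≤ D - c := by rw [Finset.mem_range, not_lt] at hD; exact hD
    omega

lemma map_eq_sum_single {N : ℕ} {M : Type*} [AddCommGroup M] [Module (MvP k n) M]
    (L : (Fin N → MvP k n) →ₗ[MvP k n] M) (g : Fin N → MvP k n) :
    L g = ∑ β, g β • L (Pi.single β 1) := by
  have hg : g = ∑ β, g β • (Pi.single β 1 : Fin N → MvP k n) := by
    funext j
    rw [Finset.sum_apply]
    have : ∀ β, (g β • (Pi.single β 1 : Fin N → MvP k n)) j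
        = if j = β then g β else 0 := by
      intro β
      rw [Pi.smul_apply, Pi.single_apply, smul_eq_mul]
      by_cases h : j = β
      · rw [if_pos h, if_pos h, mul_one]
      · rw [if_neg h, if_neg h, mul_zero]
    rw [Finset.sum_congr rfl fun β _ => this β, Finset.sum_ite_eq Finset.univ j g,
      if_pos (Finset.mem_univ j)]
  conv_lhs => rw [hg]
  rw [map_sum]
  exact Finset.sum_congr rfl fun β _ => L.map_smul _ _

/-- A family is homogeneous of (total) degree `D` for the twist `e`. -/
def HomogFam {N : ℕ} (e : Fin N → ℕ) (D : ℕ) (g : Fin N → MvP k n) : Prop :=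
  ∀ α, g α ∈ homogeneousSubmodule (Fin (n+1)) k (D - e α)

lemma eps_push {N : ℕ} {e0 : Fin N → ℕ} {D : ℕ} (he : ∀ α, e0 α ≤ D)
    (ε : (Fin N → MvP k n) →ₗ[MvP k n] MvP k n)
    (hE : ∀ β, ε (Pi.single β 1) ∈ homogeneousSubmodule (Fin (n+1)) k (e0 β))
    {g : Fin N → MvP k n} (hg : HomogFam e0 D g) :
    ε g ∈ homogeneousSubmodule (Fin (n+1)) k D := by
  rw [map_eq_sum_single]
  refine Submodule.sum_mem _ fun β _ => ?_
  rw [smul_eq_mul, mem_homogeneousSubmodule]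
  have := (mem_homogeneousSubmodule _ _).1 (hg β) |>.mul
    ((mem_homogeneousSubmodule _ _).1 (hE β))
  have heq : D - e0 β + e0 β = D := by have := he β; omega
  rwa [heq] at this

lemma delta_push {N N' : ℕ} {e : Fin N → ℕ} {e' : Fin N' → ℕ} {D : ℕ}
    (he' : ∀ β, e' β ≤ D)
    (L : (Fin N' → MvP k n) →ₗ[MvP k n] (Fin N → MvP k n))
    (hL : ∀ β α, L (Pi.single β 1) α = 0 ∨ (e α ≤ e' β ∧
      L (Pi.single β 1) α ∈ homogeneousSubmodule (Fin (n+1)) k (e' β - e α)))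
    {g : Fin N' → MvP k n} (hg : HomogFam e' D g) :
    HomogFam e D (L g) := by
  intro α
  rw [map_eq_sum_single, Finset.sum_apply]
  refine Submodule.sum_mem _ fun β _ => ?_
  rw [Pi.smul_apply, smul_eq_mul]
  rcases hL β α with h0 | ⟨hle, hmem⟩
  · rw [h0, mul_zero]
    exact Submodule.zero_mem _
  · rw [mem_homogeneousSubmodule]
    have := (mem_homogeneousSubmodule _ _).1 (hg β) |>.mul
      ((mem_homogeneousSubmodule _ _).1 hmem)
    have heq : D - e' β + (e' β - e α) = D - e α := by
      have h2 := he' β; have h3 := hle; omega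
    rwa [heq] at this

lemma graded_lift_eps {N : ℕ} {e0 : Fin N → ℕ} {D : ℕ} (he : ∀ α, e0 α ≤ D)
    (ε : (Fin N → MvP k n) →ₗ[MvP k n] MvP k n)
    (hE : ∀ β, ε (Pi.single β 1) ∈ homogeneousSubmodule (Fin (n+1)) k (e0 β))
    {y : MvP k n} (hy : y ∈ homogeneousSubmodule (Fin (n+1)) k D)
    (hyr : ∃ h, ε h = y) :
    ∃ g, HomogFam e0 D g ∧ ε g = y := by
  obtain ⟨h, hh⟩ := hyr
  refine ⟨fun α => homogeneousComponent (D - e0 α) (h α),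
    fun α => homogeneousComponent_mem _ _, ?_⟩
  have h1 : y = ∑ β, h β * ε (Pi.single β 1) := by
    rw [← hh, map_eq_sum_single]
    exact Finset.sum_congr rfl fun β _ => by rw [smul_eq_mul]
  have h3 := congrArg (homogeneousComponent D) h1
  rw [homogeneousComponent_of_mem hy, if_pos rfl, map_sum] at h3
  rw [map_eq_sum_single, h3]
  refine Finset.sum_congr rfl fun β _ => ?_
  rw [comp_mul_homog (he β) (hE β), smul_eq_mul]

lemma graded_lift_delta {N N' : ℕ} {e : Fin N → ℕ} {e' : Fin N' → ℕ} {D : ℕ}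
    (he' : ∀ β, e' β ≤ D)
    (L : (Fin N' → MvP k n) →ₗ[MvP k n] (Fin N → MvP k n))
    (hL : ∀ β α, L (Pi.single β 1) α = 0 ∨ (e α ≤ e' β ∧
      L (Pi.single β 1) α ∈ homogeneousSubmodule (Fin (n+1)) k (e' β - e α)))
    {y : Fin N → MvP k n} (hy : HomogFam e D y)
    (hyr : ∃ h, L h = y) :
    ∃ g, HomogFam e' D g ∧ L g = y := by
  obtain ⟨h, hh⟩ := hyr
  refine ⟨fun β => homogeneousComponent (D - e' β) (h β),
    fun β => homogeneousComponent_mem _ _, ?_⟩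
  funext α
  have h1 : y α = ∑ β, h β * L (Pi.single β 1) α := by
    rw [← hh, map_eq_sum_single, Finset.sum_apply]
    exact Finset.sum_congr rfl fun β _ => by rw [Pi.smul_apply, smul_eq_mul]
  have h3 := congrArg (homogeneousComponent (D - e α)) h1
  rw [homogeneousComponent_of_mem (hy α), if_pos rfl, map_sum] at h3
  rw [map_eq_sum_single, Finset.sum_apply, h3]
  refine Finset.sum_congr rfl fun β _ => ?_
  rw [Pi.smul_apply, smul_eq_mul]
  rcases hL β α with h0 | ⟨hle, hmem⟩
  · rw [h0, mul_zero, mul_zero, map_zero]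
  · rw [comp_mul_homog (by have h2 := he' β; have h3 := hle; omega) hmem]
    have heq : D - e α - (e' β - e α) = D - e' β := by
      have h2 := he' β; have h3 := hle; omega
    rw [heq]

lemma homog_kd {N : ℕ} {e : Fin N → ℕ} {D : ℕ} (he : ∀ α, e α ≤ D)
    (t : Finset (Fin (n+1)) → (Fin N → MvP k n)) (T : Finset (Fin (n+1)))
    (ht : ∀ i ∈ T, HomogFam e D (t (T.erase i))) :
    HomogFam e (D+1) (kd k t T) := by
  intro α
  rw [kd, Finset.sum_apply]
  refine Submodule.sum_mem _ fun i hi => ?_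
  rw [Pi.smul_apply]
  refine zsmul_mem ?_ _
  rw [Pi.smul_apply, smul_eq_mul, mem_homogeneousSubmodule]
  have := (isHomogeneous_X k i).mul ((mem_homogeneousSubmodule _ _).1 (ht i hi α))
  have heq : 1 + (D - e α) = D + 1 - e α := by have := he α; omega
  rwa [heq] at this

end Graded

section Chase

lemma homog_pos_mem {c : ℕ} (hc : c ≠ 0) {g : MvP k n}
    (hg : g ∈ homogeneousSubmodule (Fin (n+1)) k c) : g ∈ JV k n Finset.univ := by
  have hV : Vlt n (n+1) = Finset.univ := by
    ext i; simp [mem_Vlt, i.isLt]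
  have hkill : killLow (n+1) g = 0 := by
    have hfun : (fun i : Fin (n+1) => if (i:ℕ) < n+1 then (0 : MvP k n) else X i)
        = fun _ => 0 := by
      funext i
      rw [if_pos i.isLt]
    rw [killLow, hfun]
    have hcc : constantCoeff g = 0 := by
      have := ((mem_homogeneousSubmodule _ _).1 hg).coeff_eq_zero (d := 0) (by simpa using hc.symm)
      simpa [constantCoeff_eq] using this
    rw [aeval_zero', hcc, map_zero]
  have hsub := sub_killLow_mem (q := n+1) g
  rw [hkill, sub_zero, hV] at hsub
  exact hsub

/-- Combined extraction lemma: exactness in the middle, explicit extraction at the top. -/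
lemma extract_general {N : ℕ} (P : ℕ) (hP1 : 1 ≤ P) (hPle : P ≤ n + 1)
    (t : Finset (Fin (n+1)) → (Fin N → MvP k n))
    (hcoc : ∀ T, T.card = P + 1 → kd k t T = 0)
    (htop : P = n + 1 → ∀ α, t Finset.univ α ∈ JV k n Finset.univ) :
    ∃ u, ∀ T, T.card = P → t T = kd k u T := by
  have hV : Vlt n (n+1) = Finset.univ := by
    ext i; simp [mem_Vlt, i.isLt]
  rcases lt_or_eq_of_le hPle with hlt | heq
  · obtain ⟨u, _, hu⟩ := koszul_exact (n+1) le_rfl P hP1 hlt t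
      (fun T _ hT => hcoc T hT)
    exact ⟨u, fun T hT => hu T (by rw [hV]; exact Finset.subset_univ T) hT⟩
  · obtain ⟨u, _, hu⟩ := span_extract Finset.univ (t Finset.univ) (htop heq)
    refine ⟨u, fun T hT => ?_⟩
    have hTu : T = Finset.univ := Finset.eq_univ_of_card T (by simp [hT, heq])
    rw [hTu]
    exact hu

/-- Link condition for the descending chase. -/
def DscLink {ρ : ℕ → ℕ}
    (δ : ∀ i, (Fin (ρ (i+1)) → MvP k n) →ₗ[MvP k n] (Fin (ρ i) → MvP k n))
    (ε : (Fin (ρ 0) → MvP k n) →ₗ[MvP k n] MvP k n) (f : MvP k n)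
    (s : ∀ q, Finset (Fin (n+1)) → (Fin (ρ q) → MvP k n)) :
    ∀ p : ℕ, (Finset (Fin (n+1)) → (Fin (ρ p) → MvP k n)) → Prop
  | 0 => fun t => ∀ j, ε (t {j}) = (X j : MvP k n) * f
  | (p+1) => fun t => ∀ T, T.card = p + 2 → δ p (t T) = kd k (s p) T

set_option maxHeartbeats 1000000 in
lemma key_step {ρ : ℕ → ℕ} {e : ∀ i, Fin (ρ i) → ℕ}
    {δ : ∀ i, (Fin (ρ (i+1)) → MvP k n) →ₗ[MvP k n] (Fin (ρ i) → MvP k n)}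
    {ε : (Fin (ρ 0) → MvP k n) →ₗ[MvP k n] MvP k n}
    {I : Ideal (MvP k n)} {r : ℤ}
    (hrange : LinearMap.range ε = I)
    (hker0 : LinearMap.ker ε = LinearMap.range (δ 0))
    (hker : ∀ i, LinearMap.ker (δ i) = LinearMap.range (δ (i+1)))
    (hE : ∀ β, ε (Pi.single β 1) ∈ homogeneousSubmodule (Fin (n+1)) k (e 0 β))
    (hD : ∀ i (β : Fin (ρ (i+1))) (α : Fin (ρ i)), δ i (Pi.single β 1) α = 0 ∨
      (e i α ≤ e (i+1) β ∧ δ i (Pi.single β 1) α ∈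
        homogeneousSubmodule (Fin (n+1)) k (e (i+1) β - e i α)))
    (hbound : ∀ i (β : Fin (ρ i)), (e i β : ℤ) ≤ r + i)
    {d : ℕ} (hrd : r ≤ (d:ℤ)) {f : MvP k n}
    (hf : f ∈ homogeneousSubmodule (Fin (n+1)) k d)
    (hxf : ∀ j, (X j : MvP k n) * f ∈ I) : f ∈ I := by
  classical
  have heN : ∀ i (β : Fin (ρ i)), e i β ≤ d + i := by
    intro i β
    have h1 := hbound i β
    have : (e i β : ℤ) ≤ (d : ℤ) + i := by omega
    exact_mod_cast this
  -- ## Ascent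
  have ascent : ∀ p : ℕ, ∃ s : ∀ q : ℕ, Finset (Fin (n+1)) → (Fin (ρ q) → MvP k n),
      (∀ j, ε (s 0 {j}) = (X j : MvP k n) * f) ∧
      (∀ q, q < p → ∀ T, T.card = q + 2 → δ q (s (q+1) T) = kd k (s q) T) ∧
      (∀ q, ∀ T, T.card = q + 1 → HomogFam (e q) (d + q + 1) (s q T)) := by
    intro p
    induction p with
    | zero =>
      have hlift0 : ∀ j : Fin (n+1), ∃ g, HomogFam (e 0) (d + 1) g ∧
          ε g = (X j : MvP k n) * f := by
        intro j
        refine graded_lift_eps (fun α => by have := heN 0 α; omega) ε hE ?_ ?_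
        · rw [mem_homogeneousSubmodule]
          have := (isHomogeneous_X k j).mul ((mem_homogeneousSubmodule _ _).1 hf)
          rwa [Nat.add_comm 1 d] at this
        · have : (X j : MvP k n) * f ∈ LinearMap.range ε := by rw [hrange]; exact hxf j
          exact this
      choose g hg1 hg2 using hlift0
      refine ⟨fun q => match q with
        | 0 => fun T => if h : ∃ j, T = {j} then g h.choose else 0
        | (_+1) => fun _ => 0, ?_, ?_, ?_⟩
      · intro j
        have hex : ∃ j' : Fin (n+1), ({j} : Finset (Fin (n+1))) = {j'} := ⟨j, rfl⟩
        show ε (if h : ∃ j' : Fin (n+1), ({j} : Finset (Fin (n+1))) = {j'} then g h.choose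
          else 0) = (X j : MvP k n) * f
        rw [dif_pos hex]
        have hjj : hex.choose = j := by
          have := hex.choose_spec
          exact (Finset.singleton_inj.1 this.symm)
        rw [hjj, hg2]
      · intro q hq; omega
      · intro q T hT
        match q with
        | 0 =>
          obtain ⟨j, rfl⟩ := Finset.card_eq_one.1 hT
          have hex : ∃ j' : Fin (n+1), ({j} : Finset (Fin (n+1))) = {j'} := ⟨j, rfl⟩
          show HomogFam (e 0) (d + 0 + 1)
            (if h : ∃ j' : Fin (n+1), ({j} : Finset (Fin (n+1))) = {j'} then g h.choose else 0)
          rw [dif_pos hex]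
          exact hg1 _
        | (q+1) =>
          intro α
          exact Submodule.zero_mem _
    | succ p IH =>
      obtain ⟨s, hbase, hlink, hhom⟩ := IH
      have hmem : ∀ T : Finset (Fin (n+1)), T.card = p + 2 →
          ∃ h, δ p h = kd k (s p) T := by
        intro T hT
        have hrg : kd k (s p) T ∈ LinearMap.range (δ p) := by
          match p, hT with
          | 0, hT =>
            rw [← hker0, LinearMap.mem_ker, kd_map]
            have hcg : ∀ i ∈ T, ε (s 0 (T.erase i)) =
                (fun U => kd k (fun V => if V = (∅ : Finset (Fin (n+1))) then f else 0) U)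
                  (T.erase i) := by
              intro i hi
              obtain ⟨j, hj⟩ := Finset.card_eq_one.1
                (by rw [Finset.card_erase_of_mem hi, hT])
              rw [hj]
              show ε (s 0 {j}) = kd k (fun V => if V = (∅ : Finset (Fin (n+1))) then f else 0) {j}
              rw [kd_singleton, if_pos rfl, hbase j, smul_eq_mul]
            exact (kd_congr k (t := fun U => ε (s 0 U)) hcg).trans (kd_kd k _ T)
          | (p'+1), hT =>
            rw [← hker p', LinearMap.mem_ker, kd_map]
            have hcg : ∀ i ∈ T, (fun U => δ p' (s (p'+1) U)) (T.erase i) =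
                (fun U => kd k (s p') U) (T.erase i) := by
              intro i hi
              exact hlink p' (by omega) (T.erase i)
                (by have := Finset.card_erase_of_mem hi; omega)
            exact (kd_congr k (t := fun U => δ p' (s (p'+1) U)) hcg).trans (kd_kd k _ T)
        exact hrg
      have hlift : ∀ T : Finset (Fin (n+1)), T.card = p + 2 →
          ∃ gg, HomogFam (e (p+1)) (d + (p+1) + 1) gg ∧ δ p gg = kd k (s p) T := by
        intro T hT
        refine graded_lift_delta (fun β => by have := heN (p+1) β; omega) (δ p) (hD p)
          ?_ (hmem T hT)
        exact homog_kd (fun α => by have := heN p α; omega) (s p) T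
          (fun i hi => hhom p (T.erase i) (by have := Finset.card_erase_of_mem hi; omega))
      set NS : Finset (Fin (n+1)) → (Fin (ρ (p+1)) → MvP k n) := fun T =>
        if h : T.card = p + 2 then (hlift T h).choose else 0 with hNS
      set s' : ∀ q : ℕ, Finset (Fin (n+1)) → (Fin (ρ q) → MvP k n) := fun q =>
        if h : q = p + 1 then (fun T α => NS T (Fin.cast (congrArg ρ h) α)) else s q with hs'
      have hs'lo : ∀ q, q ≠ p + 1 → s' q = s q := by
        intro q hq
        rw [hs']
        exact dif_neg hq
      have hs'hi : s' (p+1) = NS := by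
        rw [hs']
        have h1 : (fun q => if h : q = p + 1 then
            (fun T α => NS T (Fin.cast (congrArg ρ h) α)) else s q) (p+1)
            = if h : p+1 = p+1 then (fun T α => NS T (Fin.cast (congrArg ρ h) α))
              else s (p+1) := rfl
        rw [h1, dif_pos rfl]
        funext T α
        rfl
      refine ⟨s', ?_, ?_, ?_⟩
      · intro j
        rw [hs'lo 0 (by omega)]
        exact hbase j
      · intro q hq T hT
        by_cases hq1 : q = p
        · subst hq1
          rw [hs'hi, hs'lo q (by omega), hNS]
          have h2 : (fun T => if h : T.card = q + 2 then (hlift T h).choose else 0) T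
              = (hlift T hT).choose := dif_pos hT
          rw [h2]
          exact (hlift T hT).choose_spec.2
        · rw [hs'lo (q+1) (by omega), hs'lo q (by omega)]
          exact hlink q (by omega) T hT
      · intro q T hT
        by_cases hq1 : q = p + 1
        · subst hq1
          rw [hs'hi, hNS]
          have h2 : (fun T => if h : T.card = p + 2 then (hlift T h).choose else 0) T
              = (hlift T hT).choose := dif_pos hT
          rw [h2]
          exact (hlift T hT).choose_spec.1
        · rw [hs'lo q hq1]
          exact hhom q T hT
  obtain ⟨s, hbase, hlink, hhom⟩ := ascent n
  -- ## Descent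
  have desc : ∀ fuel p, p + fuel = n →
      ∃ t : Finset (Fin (n+1)) → (Fin (ρ p) → MvP k n),
        (∀ T, T.card = p + 2 → kd k t T = 0) ∧
        DscLink δ ε f s p t ∧
        (p = n → ∀ T, T.card = p + 1 → HomogFam (e p) (d + p + 1) (t T)) := by
    intro fuel
    induction fuel with
    | zero =>
      intro p hp
      refine ⟨s p, ?_, ?_, ?_⟩
      · intro T hT
        exfalso
        have hcard := Finset.card_le_univ T
        rw [Fintype.card_fin] at hcard
        omega
      · match p, hp with
        | 0, hp => exact fun j => hbase j
        | (p'+1), hp => exact fun T hT => hlink p' (by omega) T hT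
      · intro _ T hT
        exact hhom p T hT
    | succ fuel IHf =>
      intro p hp
      obtain ⟨t₁, hc₁, hl₁, hh₁⟩ := IHf (p+1) (by omega)
      obtain ⟨v, hv⟩ : ∃ v, ∀ T, T.card = p + 2 → t₁ T = kd k v T := by
        refine extract_general (p+2) (by omega) (by omega) t₁
          (fun T hT => hc₁ T (by omega)) ?_
        intro htopeq α
        have hn : p + 1 = n := by omega
        have hhom1 := hh₁ hn Finset.univ
          (by rw [Finset.card_univ, Fintype.card_fin]; omega)
        have hdegpos : d + (p+1) + 1 - e (p+1) α ≠ 0 := by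
          have := heN (p+1) α
          omega
        exact homog_pos_mem hdegpos (hhom1 α)
      have hl₁' : ∀ T, T.card = p + 2 → δ p (t₁ T) = kd k (s p) T := hl₁
      refine ⟨fun T => s p T - δ p (v T), ?_, ?_, ?_⟩
      · intro T hT
        rw [kd_sub]
        have hmapv : kd k (fun U => δ p (v U)) T = δ p (kd k v T) := (kd_map k (δ p) v T).symm
        rw [hmapv, ← hv T hT, hl₁' T hT, sub_self]
      · match p, v, hp with
        | 0, v, hp =>
          intro j
          show ε (s 0 {j} - δ 0 (v {j})) = (X j : MvP k n) * f
          rw [map_sub, hbase j]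
          have hz : ε (δ 0 (v {j})) = 0 := by
            have hm : δ 0 (v {j}) ∈ LinearMap.range (δ 0) := ⟨v {j}, rfl⟩
            rw [← hker0] at hm
            exact hm
          rw [hz, sub_zero]
        | (p'+1), v, hp =>
          intro T hT
          show δ p' (s (p'+1) T - δ (p'+1) (v T)) = kd k (s p') T
          rw [map_sub]
          have hz : δ p' (δ (p'+1) (v T)) = 0 := by
            have hm : δ (p'+1) (v T) ∈ LinearMap.range (δ (p'+1)) := ⟨v T, rfl⟩
            rw [← hker p'] at hm
            exact hm
          rw [hz, sub_zero]
          exact hlink p' (by omega) T hT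
      · intro h
        exact absurd h (by omega)
  -- ## Conclusion
  obtain ⟨t₀, hc₀, hl₀, hh₀⟩ := desc n 0 (by omega)
  have hl₀' : ∀ j, ε (t₀ {j}) = (X j : MvP k n) * f := hl₀
  obtain ⟨u, hu⟩ : ∃ u, ∀ T, T.card = 1 → t₀ T = kd k u T := by
    refine extract_general 1 le_rfl (by omega) t₀ (fun T hT => hc₀ T (by omega)) ?_
    intro h1 α
    have hhom0 := hh₀ (by omega) Finset.univ
      (by rw [Finset.card_univ, Fintype.card_fin]; omega)
    have hdegpos : d + 0 + 1 - e 0 α ≠ 0 := by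
      have := heN 0 α
      omega
    exact homog_pos_mem hdegpos (hhom0 α)
  have hj0 : t₀ {0} = kd k u {0} := hu {0} (Finset.card_singleton _)
  rw [kd_singleton] at hj0
  have hfin : (X (0 : Fin (n+1)) : MvP k n) * f = (X (0 : Fin (n+1)) : MvP k n) * ε (u ∅) := by
    rw [← hl₀' 0, hj0, map_smul, smul_eq_mul]
  have hfeq : f = ε (u ∅) := mul_left_cancel₀ (X_ne_zero _) hfin
  rw [hfeq, ← hrange]
  exact ⟨u ∅, rfl⟩

end Chase

end RegSat

/-- An `r`-regular homogeneous ideal agrees with its saturation in all degrees `≥ r`. -/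
theorem regular_implies_saturated_in_degrees {k : Type*} [Field k] {n : ℕ}
    (I : Ideal (MvP k n))
    (hI : Ideal.IsHomogeneous (homogeneousSubmodule (Fin (n+1)) k) I)
    (r : ℤ) (hreg : IdealIsRegular I r) :
    SatInDegrees I r := by
  classical
  obtain ⟨ρ, e, δ, ε, hrange, hker0, hker, hE, hD, hbound⟩ := hreg
  have hXmem : ∀ j : Fin (n+1), (X j : MvP k n) ∈ irrIdeal k n :=
    fun j => Ideal.subset_span ⟨j, rfl⟩
  -- every element of I is in the saturation
  have hIle : I ≤ satIdeal I := by
    intro x hx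
    have hx0 : x ∈ I.colon ((irrIdeal k n ^ 0 : Ideal (MvP k n)) : Set (MvP k n)) := by
      rw [Submodule.mem_colon]
      intro p _
      rw [smul_eq_mul]
      exact Ideal.mul_mem_right p I hx
    exact (le_iSup (fun t => I.colon ((irrIdeal k n ^ t : Ideal (MvP k n)) : Set (MvP k n))) 0) hx0
  -- main induction: high-degree elements of each colon ideal lie in I
  have main : ∀ (t : ℕ) (d : ℕ), r ≤ (d : ℤ) →
      ∀ f ∈ homogeneousSubmodule (Fin (n+1)) k d,
        f ∈ I.colon ((irrIdeal k n ^ t : Ideal (MvP k n)) : Set (MvP k n)) → f ∈ I := by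
    intro t
    induction t with
    | zero =>
      intro d hd f hf hft
      have h1 : f • (1 : MvP k n) ∈ I := by
        refine Submodule.mem_colon.1 hft 1 ?_
        rw [pow_zero, Ideal.one_eq_top]
        exact Submodule.mem_top
      rwa [smul_eq_mul, mul_one] at h1
    | succ t IH =>
      intro d hd f hf hft
      refine RegSat.key_step hrange hker0 hker hE hD hbound hd hf ?_
      intro j
      refine IH (d+1) (by push_cast; omega) ((X j : MvP k n) * f) ?_ ?_
      · rw [mem_homogeneousSubmodule]
        have := (isHomogeneous_X k j).mul ((mem_homogeneousSubmodule _ _).1 hf)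
        rwa [Nat.add_comm 1 d] at this
      · rw [Submodule.mem_colon]
        intro p hp
        have h2 : (X j : MvP k n) * p ∈ irrIdeal k n ^ (t+1) := by
          rw [pow_succ, mul_comm (X j : MvP k n) p]
          exact Ideal.mul_mem_mul hp (hXmem j)
        have h3 := Submodule.mem_colon.1 hft ((X j : MvP k n) * p) h2
        rw [smul_eq_mul] at h3
        rw [smul_eq_mul]
        have heq : ((X j : MvP k n) * f) * p = f * ((X j : MvP k n) * p) := by ring
        rwa [heq]
  -- conclude
  intro d hd f hf
  constructor
  · intro hfI
    exact hIle hfI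
  · intro hfs
    have hdir : Directed (· ≤ ·) (fun t : ℕ => I.colon ((irrIdeal k n ^ t : Ideal (MvP k n)) : Set (MvP k n))) := by
      intro a b
      refine ⟨max a b, ?_, ?_⟩ <;>
      · intro x hx
        rw [Submodule.mem_colon]
        intro p hp
        refine Submodule.mem_colon.1 hx p ?_
        exact Ideal.pow_le_pow_right (by omega) hp
    obtain ⟨t, ht⟩ := (Submodule.mem_iSup_of_directed _ hdir).1 hfs
    exact main t d hd f hf ht
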